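/- Let D = diag(λ₁,…,λₙ) be a diagonal n×n complex matrix with λ_k > 0 for all k and Σ_{k=1}^n λ_k = 1, let f₁, f₂ ∈ F_op satisfy f₁(0)/f₁(t) ≥ f₂(0)/f₂(t) for all t > 0, and let A⁽¹⁾,…,A⁽ᴺ⁾ be Hermitian n×n complex matrices. Then det(qCov^{s}_{D,f₁}) ≥ det(qCov^{as}_{D,f₂}), where qCov^{s}_{D,f} = Cov_{D,g_f^{s}} and qCov^{as}_{D,f} = Cov_{D,g_f^{as}}. -/

import Mathlib

open ComplexOrder Matrix

/-- The diagonal density matrix `D = diag(λ₁,…,λₙ)`. -/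
noncomputable def Dmat {n : ℕ} (lam : Fin n → ℝ) : Matrix (Fin n) (Fin n) ℂ :=
  Matrix.diagonal fun k => (lam k : ℂ)

/-- `A₀ = A - Tr(D A)·I`. -/
noncomputable def cent {n : ℕ} (lam : Fin n → ℝ) (A : Matrix (Fin n) (Fin n) ℂ) :
    Matrix (Fin n) (Fin n) ℂ :=
  A - (Dmat lam * A).trace • (1 : Matrix (Fin n) (Fin n) ℂ)

/-- The `N×N` covariance matrix `[Cov_{D,g}]_{ij} = (A⁽ⁱ⁾₀, A⁽ʲ⁾₀)_{D,g}` where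
`(A,B)_{D,g} = Σ_{k,l} A_{lk}·B_{kl}·g(λ_k,λ_l)`. -/
noncomputable def covM {n N : ℕ} (lam : Fin n → ℝ) (g : ℝ → ℝ → ℝ)
    (A : Fin N → Matrix (Fin n) (Fin n) ℂ) : Matrix (Fin N) (Fin N) ℂ :=
  Matrix.of fun i j =>
    ∑ k, ∑ l, (g (lam k) (lam l) : ℂ) * cent lam (A i) l k * cent lam (A j) k l
/-- `f ∈ F_op`: `f : (0,∞) → (0,∞)` is operator monotone (via the continuous functional
calculus on Hermitian matrices, with the Loewner order expressed through `PosSemidef`),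
satisfies `f(x) = x·f(1/x)` for `x > 0`, and `f(1) = 1`. -/
structure IsFop (f : ℝ → ℝ) : Prop where
  pos : ∀ x : ℝ, 0 < x → 0 < f x
  opMono : ∀ (m : ℕ) (X Y : Matrix (Fin m) (Fin m) ℂ), X.PosSemidef → Y.PosSemidef →
    (Y - X).PosSemidef → (cfc f Y - cfc f X).PosSemidef
  funcEq : ∀ x : ℝ, 0 < x → f x = x * f x⁻¹
  normalized : f 1 = 1

/-- `f(0) = lim_{t→0⁺} f(t)`. -/
def IsFzero (f : ℝ → ℝ) (f0 : ℝ) : Prop :=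
  Filter.Tendsto f (nhdsWithin 0 (Set.Ioi 0)) (nhds f0)

/-- `m_f(x,y) = y·f(x/y)`. -/
noncomputable def mfun (f : ℝ → ℝ) (x y : ℝ) : ℝ := y * f (x / y)

/-- `g_cl(x,y) = (x+y)/2`. -/
noncomputable def gcl (x y : ℝ) : ℝ := (x + y) / 2

/-- `g_f^{as}(x,y) = f(0)·(x−y)²/(2·m_f(x,y))`. -/
noncomputable def gas (f : ℝ → ℝ) (f0 : ℝ) (x y : ℝ) : ℝ :=
  f0 * (x - y) ^ 2 / (2 * mfun f x y)

/-- `g_f^{s}(x,y) = f(0)·(x+y)²/(2·m_f(x,y))`. -/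
noncomputable def gs (f : ℝ → ℝ) (f0 : ℝ) (x y : ℝ) : ℝ :=
  f0 * (x + y) ^ 2 / (2 * mfun f x y)

lemma trace_Dmat_star {n : ℕ} (lam : Fin n → ℝ) {A : Matrix (Fin n) (Fin n) ℂ}
    (hA : A.IsHermitian) : star (Dmat lam * A).trace = (Dmat lam * A).trace := by
  simp only [Matrix.trace, Matrix.diag, Dmat, Matrix.diagonal_mul, star_sum, star_mul']
  refine Finset.sum_congr rfl fun k _ => ?_
  rw [hA.apply k k, Complex.star_def, Complex.conj_ofReal, mul_comm]

lemma cent_isHermitian {n : ℕ} (lam : Fin n → ℝ) {A : Matrix (Fin n) (Fin n) ℂ}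
    (hA : A.IsHermitian) : (cent lam A).IsHermitian := by
  unfold cent Matrix.IsHermitian
  rw [conjTranspose_sub, conjTranspose_smul, conjTranspose_one, trace_Dmat_star lam hA, hA.eq]

noncomputable def Gmat {n N : ℕ} (lam : Fin n → ℝ) (g : ℝ → ℝ → ℝ)
    (A : Fin N → Matrix (Fin n) (Fin n) ℂ) : Matrix (Fin n × Fin n) (Fin N) ℂ :=
  Matrix.of fun p i => (Real.sqrt (g (lam p.1) (lam p.2)) : ℂ) * cent lam (A i) p.1 p.2

lemma covM_eq_gram {n N : ℕ} (lam : Fin n → ℝ) (g : ℝ → ℝ → ℝ)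
    (A : Fin N → Matrix (Fin n) (Fin n) ℂ) (hg : ∀ k l, 0 ≤ g (lam k) (lam l))
    (hA : ∀ a, (A a).IsHermitian) :
    covM lam g A = (Gmat lam g A)ᴴ * Gmat lam g A := by
  ext i j
  simp only [covM, of_apply, Matrix.mul_apply, conjTranspose_apply, Gmat, Fintype.sum_prod_type]
  refine Finset.sum_congr rfl fun k _ => Finset.sum_congr rfl fun l _ => ?_
  have hB : star (cent lam (A i) k l) = cent lam (A i) l k := (cent_isHermitian lam (hA i)).apply l k
  have h2 : (Real.sqrt (g (lam k) (lam l)) : ℂ) * (Real.sqrt (g (lam k) (lam l)) : ℂ)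
      = (g (lam k) (lam l) : ℂ) := by
    rw [← Complex.ofReal_mul, Real.mul_self_sqrt (hg k l)]
  rw [star_mul', Complex.star_def, Complex.conj_ofReal,
    show (starRingEnd ℂ) (cent lam (A i) k l) = cent lam (A i) l k from hB, ← h2]
  ring

lemma covM_posSemidef {n N : ℕ} (lam : Fin n → ℝ) (g : ℝ → ℝ → ℝ)
    (A : Fin N → Matrix (Fin n) (Fin n) ℂ) (hg : ∀ k l, 0 ≤ g (lam k) (lam l))
    (hA : ∀ a, (A a).IsHermitian) : (covM lam g A).PosSemidef := by
  rw [covM_eq_gram lam g A hg hA]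
  exact posSemidef_conjTranspose_mul_self _

lemma covM_sub {n N : ℕ} (lam : Fin n → ℝ) (g1 g2 : ℝ → ℝ → ℝ)
    (A : Fin N → Matrix (Fin n) (Fin n) ℂ) :
    covM lam g1 A - covM lam g2 A = covM lam (fun x y => g1 x y - g2 x y) A := by
  ext i j
  simp only [covM, Matrix.sub_apply, of_apply, ← Finset.sum_sub_distrib, Complex.ofReal_sub]
  refine Finset.sum_congr rfl fun k _ => Finset.sum_congr rfl fun l _ => ?_
  ring

set_option maxHeartbeats 1000000 in
lemma eigenvalues_le_one {N : ℕ} {Z : Matrix (Fin N) (Fin N) ℂ} (hZ : Z.PosSemidef)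
    (h1Z : ((1 : Matrix (Fin N) (Fin N) ℂ) - Z).PosSemidef) (i : Fin N) :
    hZ.1.eigenvalues i ≤ 1 := by
  set w : Fin N → ℂ := fun j => hZ.1.eigenvectorBasis i j with hw
  have heig : hZ.1.eigenvalues i = RCLike.re (star w ⬝ᵥ Z *ᵥ w) := hZ.1.eigenvalues_eq i
  have hvv : star w ⬝ᵥ w = 1 := by
    have h1 : (inner ℂ (hZ.1.eigenvectorBasis i) (hZ.1.eigenvectorBasis i) : ℂ) = 1 := by
      rw [inner_self_eq_norm_sq_to_K, hZ.1.eigenvectorBasis.orthonormal.1 i]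
      simp
    rw [← h1, PiLp.inner_apply]
    refine Finset.sum_congr rfl fun j _ => ?_
    show star (w j) * w j = _
    rw [RCLike.inner_apply]
    exact mul_comm _ _
  have h0 := h1Z.re_dotProduct_nonneg w
  rw [sub_mulVec, one_mulVec, dotProduct_sub, hvv, map_sub] at h0
  simp only [RCLike.one_re] at h0
  linarith

open scoped MatrixOrder in
set_option maxHeartbeats 1000000 in
lemma det_re_mono {N : ℕ} {X Y : Matrix (Fin N) (Fin N) ℂ} (hX : X.PosSemidef)
    (hXY : (Y - X).PosSemidef) : X.det.re ≤ Y.det.re := by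
  have hY : Y.PosSemidef := by simpa using hXY.add hX
  by_cases hU : IsUnit Y.det
  · have hRR : CFC.sqrt Y * CFC.sqrt Y = Y := CFC.sqrt_mul_sqrt_self Y hY.nonneg
    set R := CFC.sqrt Y with hRdef
    have hR : R.PosSemidef := (CFC.sqrt_nonneg Y).posSemidef
    have hRdetU : IsUnit R.det := by
      have h : R.det * R.det = Y.det := by rw [← det_mul, hRR]
      exact isUnit_of_mul_isUnit_left (h ▸ hU)
    have hRinv : R⁻¹ * R = 1 := nonsing_inv_mul R hRdetU
    have hRinv' : R * R⁻¹ = 1 := mul_nonsing_inv R hRdetU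
    have hRiH : (R⁻¹).IsHermitian := hR.1.inv
    set Z := R⁻¹ * X * R⁻¹ with hZdef
    have hZ : Z.PosSemidef := by
      have h := hX.mul_mul_conjTranspose_same R⁻¹
      rwa [hRiH.eq] at h
    have h1Z : ((1 : Matrix (Fin N) (Fin N) ℂ) - Z).PosSemidef := by
      have h := hXY.mul_mul_conjTranspose_same R⁻¹
      rw [hRiH.eq] at h
      have e : R⁻¹ * (Y - X) * R⁻¹ = 1 - Z := by
        rw [Matrix.mul_sub, Matrix.sub_mul, hZdef, ← hRR]
        congr 1
        calc R⁻¹ * (R * R) * R⁻¹ = R⁻¹ * (R * (R * R⁻¹)) := by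
              simp only [Matrix.mul_assoc]
          _ = 1 := by rw [hRinv', Matrix.mul_one, hRinv]
      rwa [e] at h
    have hXeq : X = R * Z * R := by
      calc X = (R * R⁻¹) * X * (R⁻¹ * R) := by rw [hRinv', hRinv, Matrix.one_mul, Matrix.mul_one]
        _ = R * Z * R := by simp only [hZdef, Matrix.mul_assoc]
    have hZdet : Z.det = ((∏ i, hZ.1.eigenvalues i : ℝ) : ℂ) := by
      rw [hZ.1.det_eq_prod_eigenvalues]; push_cast; rfl
    have hRdet : R.det = ((∏ i, hR.1.eigenvalues i : ℝ) : ℂ) := by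
      rw [hR.1.det_eq_prod_eigenvalues]; push_cast; rfl
    have hXdet : X.det = R.det * Z.det * R.det := by rw [hXeq, det_mul, det_mul]
    have hYdet : Y.det = R.det * R.det := by rw [← hRR, det_mul]
    set ρ := ∏ i, hR.1.eigenvalues i with hρdef
    set z := ∏ i, hZ.1.eigenvalues i with hzdef
    have hXre : X.det.re = ρ * z * ρ := by
      rw [hXdet, hRdet, hZdet, ← Complex.ofReal_mul, ← Complex.ofReal_mul, Complex.ofReal_re]
    have hYre : Y.det.re = ρ * ρ := by
      rw [hYdet, hRdet, ← Complex.ofReal_mul, Complex.ofReal_re]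
    have hρ : 0 ≤ ρ := Finset.prod_nonneg fun i _ => hR.eigenvalues_nonneg i
    have hz0 : 0 ≤ z := Finset.prod_nonneg fun i _ => hZ.eigenvalues_nonneg i
    have hz1 : z ≤ 1 := Finset.prod_le_one (fun i _ => hZ.eigenvalues_nonneg i)
      (fun i _ => eigenvalues_le_one hZ h1Z i)
    rw [hXre, hYre]
    clear_value ρ z
    nlinarith
  · have hYdet0 : Y.det = 0 := by simpa [isUnit_iff_ne_zero] using hU
    obtain ⟨v, hv0, hv⟩ := (Matrix.exists_mulVec_eq_zero_iff).mpr hYdet0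
    have h1 : star v ⬝ᵥ (Y - X) *ᵥ v = - (star v ⬝ᵥ X *ᵥ v) := by
      rw [sub_mulVec, dotProduct_sub, hv, dotProduct_zero, zero_sub]
    have h2 : star v ⬝ᵥ X *ᵥ v = 0 := by
      refine le_antisymm ?_ (hX.dotProduct_mulVec_nonneg v)
      have h := hXY.dotProduct_mulVec_nonneg v
      rw [h1] at h
      exact neg_nonneg.mp h
    have h3 : X *ᵥ v = 0 := (hX.dotProduct_mulVec_zero_iff v).mp h2
    have hXdet0 : X.det = 0 := Matrix.exists_mulVec_eq_zero_iff.mp ⟨v, hv0, h3⟩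
    simp [hXdet0, hYdet0]

lemma mfun_pos {f : ℝ → ℝ} (hf : IsFop f) {x y : ℝ} (hx : 0 < x) (hy : 0 < y) :
    0 < mfun f x y :=
  mul_pos hy (hf.pos _ (div_pos hx hy))

lemma gas_nonneg {f : ℝ → ℝ} (hf : IsFop f) {f0 : ℝ} (hf0 : 0 ≤ f0) {x y : ℝ}
    (hx : 0 < x) (hy : 0 < y) : 0 ≤ gas f f0 x y :=
  div_nonneg (mul_nonneg hf0 (sq_nonneg _)) (by linarith [mfun_pos hf hx hy])

lemma gas_le_gs {f₁ f₂ : ℝ → ℝ} (hf₁ : IsFop f₁) (hf₂ : IsFop f₂) {f01 f02 : ℝ}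
    (hf01 : 0 ≤ f01) (hff : ∀ t : ℝ, 0 < t → f02 / f₂ t ≤ f01 / f₁ t)
    {x y : ℝ} (hx : 0 < x) (hy : 0 < y) :
    gas f₂ f02 x y ≤ gs f₁ f01 x y := by
  have hm1 := mfun_pos hf₁ hx hy
  have hm2 := mfun_pos hf₂ hx hy
  have hp1 := hf₁.pos _ (div_pos hx hy)
  have hp2 := hf₂.pos _ (div_pos hx hy)
  have e2 : gas f₂ f02 x y = (x - y) ^ 2 / (2 * y) * (f02 / f₂ (x / y)) := by
    unfold gas mfun; field_simp
  have e1 : gas f₁ f01 x y = (x - y) ^ 2 / (2 * y) * (f01 / f₁ (x / y)) := by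
    unfold gas mfun; field_simp
  have step1 : gas f₂ f02 x y ≤ gas f₁ f01 x y := by
    rw [e1, e2]
    exact mul_le_mul_of_nonneg_left (hff _ (div_pos hx hy)) (by positivity)
  have step2 : gas f₁ f01 x y ≤ gs f₁ f01 x y := by
    have e3 : gs f₁ f01 x y - gas f₁ f01 x y = f01 * (4 * x * y) / (2 * mfun f₁ x y) := by
      unfold gas gs; field_simp; ring
    have h4 : 0 ≤ f01 * (4 * x * y) / (2 * mfun f₁ x y) :=
      div_nonneg (mul_nonneg hf01 (by positivity)) (by linarith)
    linarith
  linarith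

lemma fzero_nonneg {f : ℝ → ℝ} (hf : IsFop f) {f0 : ℝ} (hf0 : IsFzero f f0) : 0 ≤ f0 :=
  ge_of_tendsto hf0 (eventually_nhdsWithin_of_forall fun t ht => (hf.pos t ht).le)

/-- If `f₁(0)/f₁(t) ≥ f₂(0)/f₂(t)` for all `t > 0`, then `det(qCov^{s}_{D,f₁}) ≥ det(qCov^{as}_{D,f₂})`. -/
theorem det_qCov_s_ge_det_qCov_as (n N : ℕ) (lam : Fin n → ℝ)
    (hlam : ∀ k, 0 < lam k) (hsum : ∑ k, lam k = 1)
    (f₁ f₂ : ℝ → ℝ) (hf₁ : IsFop f₁) (hf₂ : IsFop f₂)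
    (f01 f02 : ℝ) (hf01 : IsFzero f₁ f01) (hf02 : IsFzero f₂ f02)
    (hff : ∀ t : ℝ, 0 < t → f02 / f₂ t ≤ f01 / f₁ t)
    (A : Fin N → Matrix (Fin n) (Fin n) ℂ) (hA : ∀ a, (A a).IsHermitian) :
    (covM lam (gas f₂ f02) A).det.re ≤ (covM lam (gs f₁ f01) A).det.re := by
  have hf01nn : 0 ≤ f01 := fzero_nonneg hf₁ hf01
  have hf02nn : 0 ≤ f02 := fzero_nonneg hf₂ hf02
  have hX : (covM lam (gas f₂ f02) A).PosSemidef :=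
    covM_posSemidef lam _ A (fun k l => gas_nonneg hf₂ hf02nn (hlam k) (hlam l)) hA
  have hdiff : covM lam (gs f₁ f01) A - covM lam (gas f₂ f02) A
      = covM lam (fun x y => gs f₁ f01 x y - gas f₂ f02 x y) A := covM_sub lam _ _ A
  have hXY : (covM lam (gs f₁ f01) A - covM lam (gas f₂ f02) A).PosSemidef := by
    rw [hdiff]
    exact covM_posSemidef lam _ A
      (fun k l => sub_nonneg.mpr (gas_le_gs hf₁ hf₂ hf01nn hff (hlam k) (hlam l))) hA
  exact det_re_mono hX hXY
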